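/- Form the pattern graph whose vertices are the distinct access patterns p_1, …, p_m of the workload Q and whose edge {p_i, p_j} has weight w_ij = n_i · z_ij · (‖p_i‖ − z_ij) + n_j · z_ij · (‖p_j‖ − z_ij). For every partition of {p_1, …, p_m} into n nonempty groups, inducing a partition of Q into Q_1, …, Q_n that keeps all queries of a pattern together, one has Σ_{k=1}^{n} \overline{IPA}(Q_k) = W − Cut, where W = Σ_{1 ≤ i < j ≤ m} w_ij is the total edge weight and Cut is the total weight of edges whose two endpoint patterns lie in different groups. Consequently a partition minimizes Σ_k \overline{IPA}(Q_k) if and only if it maximizes Cut. -/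
import Mathlib


open Finset

/-- The upper bound `\overline{IPA}(Q')`.  With `p_1, …, p_m` the distinct access
patterns of `Q'`, `n_i` their multiplicities, `z_ij = |p_i ∩ p_j|` and
`‖p_i‖ = |p_i|`, it is `Σ_{i < j} (n_i·z_ij·(‖p_i‖ − z_ij) + n_j·z_ij·(‖p_j‖ − z_ij))`,
written equivalently as a sum over ordered pairs of distinct patterns. -/
def IPAbar {α : Type*} [DecidableEq α] (Q : Multiset (Finset α)) : ℕ :=
  ∑ x ∈ Q.toFinset.offDiag,
    Q.count x.1 * (x.1 ∩ x.2).card * (x.1.card - (x.1 ∩ x.2).card)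

/-- `G` is a partition of the set of distinct access patterns of `Q` into `n`
pairwise disjoint nonempty groups. -/
def IsPatternPartition {α : Type*} [DecidableEq α] (Q : Multiset (Finset α))
    {n : ℕ} (G : Fin n → Finset (Finset α)) : Prop :=
  (∀ k, (G k).Nonempty) ∧ (∀ k l, k ≠ l → Disjoint (G k) (G l)) ∧
    Finset.univ.biUnion G = Q.toFinset

/-- The cut value of a partition `G` of the pattern graph of `Q`: the total
weight of edges `{p_i, p_j}` (of weight
`n_i·z_ij·(‖p_i‖ − z_ij) + n_j·z_ij·(‖p_j‖ − z_ij)`, written as a sum over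
ordered pairs of distinct patterns) whose endpoint patterns lie in different
groups. -/
def patternCut {α : Type*} [DecidableEq α] (Q : Multiset (Finset α))
    {n : ℕ} (G : Fin n → Finset (Finset α)) : ℕ :=
  ∑ x ∈ Q.toFinset.offDiag.filter (fun x => ∀ k, ¬ (x.1 ∈ G k ∧ x.2 ∈ G k)),
    Q.count x.1 * (x.1 ∩ x.2).card * (x.1.card - (x.1 ∩ x.2).card)

lemma offDiag_filter' {α : Type*} [DecidableEq α] (s : Finset α) (p : α → Prop)
    [DecidablePred p] :
    (s.filter p).offDiag = s.offDiag.filter (fun x => p x.1 ∧ p x.2) := by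
  ext ⟨a, b⟩
  simp only [Finset.mem_offDiag, Finset.mem_filter]
  tauto

lemma key_IPA {α : Type*} [DecidableEq α] (Q : Multiset (Finset α)) {n : ℕ}
    (G : Fin n → Finset (Finset α)) (hG : IsPatternPartition Q G) :
    ∑ k : Fin n, IPAbar (Q.filter (· ∈ G k)) + patternCut Q G = IPAbar Q := by
  obtain ⟨hne, hdisj, hcover⟩ := hG
  set w : Finset α × Finset α → ℕ :=
    fun x => Q.count x.1 * (x.1 ∩ x.2).card * (x.1.card - (x.1 ∩ x.2).card) with hw
  have h1 : ∀ k : Fin n, IPAbar (Q.filter (· ∈ G k))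
      = ∑ x ∈ Q.toFinset.offDiag.filter (fun x => x.1 ∈ G k ∧ x.2 ∈ G k), w x := by
    intro k
    unfold IPAbar
    rw [Multiset.toFinset_filter, offDiag_filter']
    apply Finset.sum_congr rfl
    intro x hx
    simp only [Finset.mem_filter] at hx
    rw [Multiset.count_filter, if_pos hx.2.1]
  have h2 : ∑ k : Fin n, IPAbar (Q.filter (· ∈ G k))
      = ∑ x ∈ Q.toFinset.offDiag.filter
          (fun x => ¬ ∀ k, ¬ (x.1 ∈ G k ∧ x.2 ∈ G k)), w x := by
    rw [Finset.sum_congr rfl fun k _ => h1 k]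
    simp only [Finset.sum_filter]
    rw [Finset.sum_comm]
    apply Finset.sum_congr rfl
    intro x hx
    have hx1 : x.1 ∈ Q.toFinset := (Finset.mem_offDiag.mp hx).1
    rw [← hcover, Finset.mem_biUnion] at hx1
    obtain ⟨k0, -, hk0⟩ := hx1
    rw [Finset.sum_eq_single k0]
    · by_cases h : x.2 ∈ G k0
      · rw [if_pos ⟨hk0, h⟩, if_pos]
        push_neg
        exact ⟨k0, hk0, h⟩
      · rw [if_neg (fun hc => h hc.2), if_neg]
        push_neg
        intro k hk1
        have hkk : k = k0 := by
          by_contra hne'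
          exact Finset.disjoint_left.mp (hdisj k k0 hne') hk1 hk0
        rw [hkk]
        exact h
    · intro k _ hk
      rw [if_neg]
      intro hc
      exact Finset.disjoint_left.mp (hdisj k k0 hk) hc.1 hk0
    · simp
  rw [h2]
  unfold patternCut IPAbar
  rw [Finset.sum_filter_not_add_sum_filter]

/-- For every partition of the distinct access patterns of `Q` into `n`
nonempty groups, inducing the partition of `Q` into the sub-workloads
`Q_k = {q ∈ Q : pattern of q lies in group k}`, one has
`Σ_k \overline{IPA}(Q_k) = W − Cut`, where `W = \overline{IPA}(Q)` is the total
edge weight of the pattern graph and `Cut` is the weight of edges crossing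
between different groups.  Consequently a partition minimizes
`Σ_k \overline{IPA}(Q_k)` if and only if it maximizes `Cut`. -/
theorem sum_IPAbar_eq_total_sub_cut {α : Type*} [DecidableEq α]
    (Q : Multiset (Finset α)) (n : ℕ) (G : Fin n → Finset (Finset α))
    (hG : IsPatternPartition Q G) :
    (∑ k : Fin n, IPAbar (Q.filter (· ∈ G k)) = IPAbar Q - patternCut Q G)
      ∧ ((∀ G' : Fin n → Finset (Finset α), IsPatternPartition Q G' →
            ∑ k : Fin n, IPAbar (Q.filter (· ∈ G k))
              ≤ ∑ k : Fin n, IPAbar (Q.filter (· ∈ G' k)))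
          ↔ (∀ G' : Fin n → Finset (Finset α), IsPatternPartition Q G' →
            patternCut Q G' ≤ patternCut Q G)) := by
  have k1 := key_IPA Q G hG
  constructor
  · omega
  · constructor
    · intro h G' hG'
      have k2 := key_IPA Q G' hG'
      have := h G' hG'
      omega
    · intro h G' hG'
      have k2 := key_IPA Q G' hG'
      have := h G' hG'
      omega
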